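/- Let Λ be a constant n×n complex matrix and let W : ℝ → Matrix (Fin n) (Fin n) ℂ satisfy W′(t) = A(t)·W(t) − W(t)·Λ for all t, with W(t) invertible for every t. If x : ℝ → ℂⁿ satisfies x′(t) = A(t)·x(t) for all t, then z(t) := W(t)⁻¹·x(t) satisfies z′(t) = Λ·z(t) for all t; equivalently z(t) = exp(t·Λ)·z(0) for all t. In particular the time-varying change of variables z = W⁻¹x transforms the linear time-periodic system ẋ = A(t)x into the linear time-invariant system ż = Λz. -/

import Mathlib

open NormedSpace Filter

open scoped Topology

section LinftyAux

attribute [local instance] Matrix.linftyOpNormedRing Matrix.linftyOpNormedAlgebra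

variable {n : ℕ}

lemma floquet_aux_exp_slope (Λ : Matrix (Fin n) (Fin n) ℂ) (t : ℝ) :
    Tendsto (slope (fun s : ℝ => exp ((s : ℂ) • Λ)) t) (𝓝[≠] t)
      (𝓝 (Λ * exp ((t : ℂ) • Λ))) := by
  have h1 : HasDerivAt (fun u : ℂ => exp (u • Λ)) (Λ * exp ((t : ℂ) • Λ)) (t : ℂ) :=
    hasDerivAt_exp_smul_const' Λ ((t : ℂ))
  have h2 : HasDerivAt (fun s : ℝ => exp ((s : ℂ) • Λ)) (Λ * exp ((t : ℂ) • Λ)) t := by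
    have := (h1.hasFDerivAt.restrictScalars ℝ).comp_hasDerivAt t Complex.ofRealCLM.hasDerivAt
    exact this.congr_deriv (one_smul ℂ _)
  exact hasDerivAt_iff_tendsto_slope.mp h2

lemma floquet_aux_exp_mul_exp_neg (X : Matrix (Fin n) (Fin n) ℂ) :
    exp X * exp (-X) = 1 := by
  have := exp_add_of_commute (Commute.refl X).neg_right
  rw [add_neg_cancel, exp_zero] at this
  exact this.symm

lemma floquet_aux_exp_commute {X Y : Matrix (Fin n) (Fin n) ℂ} (h : Commute X Y) :
    Commute (exp X) Y :=
  h.exp_left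

lemma floquet_aux_inv_slope {W : ℝ → Matrix (Fin n) (Fin n) ℂ}
    {W' : Matrix (Fin n) (Fin n) ℂ} {t : ℝ}
    (h : Tendsto (slope W t) (𝓝[≠] t) (𝓝 W')) (hu : ∀ s : ℝ, IsUnit (W s)) :
    Tendsto (slope (fun s => (W s)⁻¹) t) (𝓝[≠] t)
      (𝓝 (-((W t)⁻¹ * W' * (W t)⁻¹))) := by
  have hW : HasDerivAt W W' t := hasDerivAt_iff_tendsto_slope.mpr h
  have hF : HasDerivAt (fun s => Ring.inverse (W s))
      (-((W t)⁻¹ * W' * (W t)⁻¹)) t := by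
    have := (hasFDerivAt_ringInverse (hu t).unit).comp_hasDerivAt t hW
    simp only [Matrix.nonsing_inv_eq_ringInverse]
    exact this.congr_deriv (by simp [Matrix.nonsing_inv_eq_ringInverse])
  have hG : HasDerivAt (fun s => (W s)⁻¹) (-((W t)⁻¹ * W' * (W t)⁻¹)) t := by
    refine hF.congr_of_eventuallyEq (Filter.Eventually.of_forall fun s => ?_)
    simp only [Matrix.nonsing_inv_eq_ringInverse]
  exact hasDerivAt_iff_tendsto_slope.mp hG

end LinftyAux

attribute [local instance] Matrix.normedAddCommGroup Matrix.normedSpace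

open Matrix

section SupAux

variable {n : ℕ}

/-- `mulVec` as a real-linear continuous map in the matrix argument. -/
noncomputable def floquetMulVecCLM (n : ℕ) :
    Matrix (Fin n) (Fin n) ℂ →L[ℝ] ((Fin n → ℂ) →L[ℝ] (Fin n → ℂ)) :=
  LinearMap.toContinuousLinearMap
    { toFun := fun M => LinearMap.toContinuousLinearMap (M.mulVecLin.restrictScalars ℝ)
      map_add' := by
        intro M N
        ext v i
        simp [Matrix.add_mulVec]
      map_smul' := by
        intro r M
        ext v i
        simp [Matrix.mulVec, dotProduct, Finset.smul_sum, smul_mul_assoc, mul_assoc] }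

@[simp] lemma floquetMulVecCLM_apply (M : Matrix (Fin n) (Fin n) ℂ) (v : Fin n → ℂ) :
    floquetMulVecCLM n M v = M.mulVec v := rfl

lemma floquet_hasDerivAt_mulVec {M : ℝ → Matrix (Fin n) (Fin n) ℂ}
    {M' : Matrix (Fin n) (Fin n) ℂ} {v : ℝ → Fin n → ℂ} {v' : Fin n → ℂ} {t : ℝ}
    (hM : HasDerivAt M M' t) (hv : HasDerivAt v v' t) :
    HasDerivAt (fun s => (M s).mulVec (v s)) (M'.mulVec (v t) + (M t).mulVec v') t := by
  have hc : HasDerivAt (fun s => floquetMulVecCLM n (M s)) (floquetMulVecCLM n M') t :=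
    ((floquetMulVecCLM n).hasFDerivAt.comp_hasDerivAt t hM)
  have := hc.clm_apply hv
  simpa using this

end SupAux

/-- The time-varying change of variables `z = W(t)⁻¹x` transforms the linear time-periodic system
`ẋ = A(t)x` into the linear time-invariant system `ż = Λz`, whose solutions are
`z(t) = exp(tΛ)z(0)`. -/
theorem floquet_change_of_variables
    (T : ℝ) (hT : 0 < T) (n : ℕ) (hn : 1 ≤ n)
    (A : ℝ → Matrix (Fin n) (Fin n) ℂ)
    (hA : Continuous A) (hAper : ∀ t : ℝ, A (t + T) = A t)
    (Λ : Matrix (Fin n) (Fin n) ℂ)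
    (W : ℝ → Matrix (Fin n) (Fin n) ℂ)
    (hW : ∀ t : ℝ, HasDerivAt W (A t * W t - W t * Λ) t)
    (hWunit : ∀ t : ℝ, IsUnit (W t))
    (x z : ℝ → Fin n → ℂ)
    (hx : ∀ t : ℝ, HasDerivAt x ((A t).mulVec (x t)) t)
    (hz : ∀ t : ℝ, z t = (W t)⁻¹.mulVec (x t)) :
    (∀ t : ℝ, HasDerivAt z (Λ.mulVec (z t)) t)
    ∧ ∀ t : ℝ, z t = (NormedSpace.exp ((t : ℂ) • Λ)).mulVec (z 0) := by
  have hzfun : z = fun s => (W s)⁻¹.mulVec (x s) := funext hz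
  -- Part 1: z' = Λ z
  have hderiv : ∀ t : ℝ, HasDerivAt z (Λ.mulVec (z t)) t := by
    intro t
    have hdet : IsUnit (W t).det := (Matrix.isUnit_iff_isUnit_det _).mp (hWunit t)
    have hinv : HasDerivAt (fun s => (W s)⁻¹)
        (-((W t)⁻¹ * (A t * W t - W t * Λ) * (W t)⁻¹)) t :=
      hasDerivAt_iff_tendsto_slope.mpr
        (floquet_aux_inv_slope (hasDerivAt_iff_tendsto_slope.mp (hW t)) hWunit)
    have keyM : -((W t)⁻¹ * (A t * W t - W t * Λ) * (W t)⁻¹)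
        = Λ * (W t)⁻¹ - (W t)⁻¹ * A t := by
      have h1 : (W t)⁻¹ * (A t * W t) * (W t)⁻¹ = (W t)⁻¹ * A t := by
        rw [mul_assoc, mul_assoc, Matrix.mul_nonsing_inv _ hdet, mul_one]
      have h2 : (W t)⁻¹ * (W t * Λ) * (W t)⁻¹ = Λ * (W t)⁻¹ := by
        rw [Matrix.nonsing_inv_mul_cancel_left _ _ hdet]
      rw [mul_sub, sub_mul, h1, h2, neg_sub]
    have h := floquet_hasDerivAt_mulVec hinv (hx t)
    rw [hzfun]
    convert h using 1
    simp only [keyM, Matrix.sub_mulVec, Matrix.mulVec_mulVec]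
    abel
  refine ⟨hderiv, fun t => ?_⟩
  -- Part 2: constancy of g s = exp(s • (-Λ)) ⬝ z s
  set g : ℝ → Fin n → ℂ := fun s => (NormedSpace.exp ((s : ℂ) • (-Λ))).mulVec (z s) with hg_def
  have hcomm : ∀ s : ℝ, NormedSpace.exp ((s : ℂ) • (-Λ)) * Λ
      = Λ * NormedSpace.exp ((s : ℂ) • (-Λ)) := by
    intro s
    exact floquet_aux_exp_commute (((Commute.refl Λ).neg_left).smul_left ((s : ℂ)))
  have hgderiv : ∀ s : ℝ, HasDerivAt g 0 s := by
    intro s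
    have hexp : HasDerivAt (fun u : ℝ => NormedSpace.exp ((u : ℂ) • (-Λ)))
        ((-Λ) * NormedSpace.exp ((s : ℂ) • (-Λ))) s :=
      hasDerivAt_iff_tendsto_slope.mpr (floquet_aux_exp_slope (-Λ) s)
    have h := floquet_hasDerivAt_mulVec hexp (hderiv s)
    convert h using 1
    simp only [Matrix.mulVec_mulVec]
    rw [hcomm s, neg_mul, Matrix.neg_mulVec]
    abel
  have hconst : g t = g 0 := by
    have hdiff : Differentiable ℝ g := fun s => (hgderiv s).differentiableAt
    have hfd : ∀ s : ℝ, fderiv ℝ g s = 0 := by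
      intro s
      rw [(hgderiv s).hasFDerivAt.fderiv]
      ext v
      simp
    exact is_const_of_fderiv_eq_zero hdiff hfd t 0
  have hg0 : g 0 = z 0 := by
    simp [hg_def, NormedSpace.exp_zero, Matrix.one_mulVec]
  have key : (NormedSpace.exp ((t : ℂ) • Λ)).mulVec (g t) = z t := by
    rw [hg_def]
    rw [Matrix.mulVec_mulVec]
    have : (t : ℂ) • (-Λ) = -((t : ℂ) • Λ) := by rw [smul_neg]
    rw [this, floquet_aux_exp_mul_exp_neg, Matrix.one_mulVec]
  rw [← key, hconst, hg0]
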